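/- In a simple graph G with no even cycles, any two distinct cycles share at most one vertex. -/

import Mathlib

section Aux

open SimpleGraph Walk

variable {V : Type*} {G : SimpleGraph V}

/-- Every edge of a walk has an endpoint among the non-last support vertices. -/
lemma edge_endpoint_dropLast : ∀ {u v : V} (w : G.Walk u v) (f : Sym2 V),
    f ∈ w.edges → ∃ z, z ∈ w.support.dropLast ∧ z ∈ f := by
  intro u v w
  induction w with
  | nil => simp
  | cons h w ih =>
    intro f hf
    rw [Walk.edges_cons, List.mem_cons] at hf
    rename_i p q r
    have hsup : (Walk.cons h w).support.dropLast = p :: w.support.dropLast := by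
      rw [Walk.support_cons]
      exact List.dropLast_cons_of_ne_nil (by simp)
    rcases hf with rfl | hf
    · exact ⟨_, by rw [hsup]; exact List.mem_cons_self, Sym2.mem_mk_left _ _⟩
    · obtain ⟨z, hz, hzf⟩ := ih f hf
      exact ⟨z, by rw [hsup]; exact List.mem_cons_of_mem _ hz, hzf⟩

/-- Split a walk at the first vertex belonging to `S` (the end is in `S`). -/
lemma split_at_first_hit : ∀ {q v : V} (w : G.Walk q v) (S : Set V), v ∈ S →
    ∃ b, b ∈ S ∧ ∃ (w1 : G.Walk q b) (w2 : G.Walk b v),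
      w = w1.append w2 ∧ ∀ z ∈ w1.support.dropLast, z ∉ S := by
  classical
  intro q v w
  induction w with
  | nil =>
    intro S hv
    exact ⟨_, hv, Walk.nil, Walk.nil, rfl, by simp⟩
  | cons h w ih =>
    rename_i p q' r
    intro S hv
    by_cases hp : p ∈ S
    · exact ⟨p, hp, Walk.nil, Walk.cons h w, rfl, by simp⟩
    · obtain ⟨b, hb, w1, w2, hsplit, hmem⟩ := ih S hv
      refine ⟨b, hb, Walk.cons h w1, w2, by rw [Walk.cons_append, hsplit], ?_⟩
      intro z hz
      rw [Walk.support_cons, List.dropLast_cons_of_ne_nil (by simp), List.mem_cons] at hz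
      rcases hz with rfl | hz
      · exact hp
      · exact hmem z hz

/-- Extract an "arc" of a walk: a nontrivial contiguous subwalk between two `S`-vertices whose
interior avoids `S` and whose edges avoid `F`, given some edge of the walk avoids `F`. -/
lemma arc_extraction : ∀ {p v : V} (w : G.Walk p v) (S : Set V) (F : Set (Sym2 V)),
    (∀ f ∈ F, ∀ z, z ∈ f → z ∈ S) → p ∈ S → v ∈ S → (∃ e ∈ w.edges, e ∉ F) →
    ∃ a b, a ∈ S ∧ b ∈ S ∧ ∃ (w1 : G.Walk p a) (Q : G.Walk a b) (w2 : G.Walk b v),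
      w = w1.append (Q.append w2) ∧ ¬ Q.Nil ∧
      (∀ z ∈ Q.support.tail.dropLast, z ∉ S) ∧ (∀ f ∈ Q.edges, f ∉ F) := by
  classical
  intro p v w
  induction w with
  | nil => simp
  | cons h w ih =>
    rename_i p q r
    intro S F hF hp hv he
    by_cases hq : q ∈ S
    · by_cases hpq : s(p, q) ∈ F
      · obtain ⟨e, hew, heF⟩ := he
        rw [Walk.edges_cons, List.mem_cons] at hew
        rcases hew with rfl | hew
        · exact absurd hpq heF
        obtain ⟨a, b, ha, hb, w1, Q, w2, hsplit, hQnil, hint, hQF⟩ :=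
          ih S F hF hq hv ⟨e, hew, heF⟩
        exact ⟨a, b, ha, hb, Walk.cons h w1, Q, w2, by rw [Walk.cons_append, hsplit],
          hQnil, hint, hQF⟩
      · refine ⟨p, q, hp, hq, Walk.nil, Walk.cons h Walk.nil, w, ?_, by simp, by simp, ?_⟩
        · simp
        · intro f hf
          simp only [Walk.edges_cons, Walk.edges_nil, List.mem_singleton] at hf
          subst hf; exact hpq
    · -- first edge leaves S; take the arc up to the first return to S
      obtain ⟨b, hb, w1, w2, hsplit, hmem⟩ := split_at_first_hit w S hv
      refine ⟨p, b, hp, hb, Walk.nil, Walk.cons h w1, w2, ?_, by simp, ?_, ?_⟩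
      · simp [hsplit]
      · intro z hz
        rw [Walk.support_cons, List.tail_cons] at hz
        exact hmem z hz
      · intro f hf
        rw [Walk.edges_cons, List.mem_cons] at hf
        rcases hf with rfl | hf
        · exact fun hfF => hq (hF _ hfF q (Sym2.mem_mk_right _ _))
        · obtain ⟨z, hz, hzf⟩ := edge_endpoint_dropLast w1 f hf
          exact fun hfF => hmem z hz (hF _ hfF z hzf)

variable [DecidableEq V]

lemma support_tail_ne_nil {p q : V} (w : G.Walk p q) (hw : ¬ w.Nil) :
    w.support.tail ≠ [] := by
  intro h
  have h1 := congrArg List.length h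
  simp only [List.length_tail, Walk.length_support, List.length_nil] at h1
  exact hw (Walk.nil_iff_length_eq.mpr (by omega))

lemma end_mem_tail' {p q : V} (w : G.Walk p q) (h : w.support.tail ≠ []) :
    q ∈ w.support.tail := by
  have h1 := List.getLast_mem h
  rwa [List.getLast_tail, w.getLast_support] at h1

lemma end_mem_support_tail {p q : V} (w : G.Walk p q) (hw : ¬ w.Nil) :
    q ∈ w.support.tail :=
  end_mem_tail' w (support_tail_ne_nil w hw)

lemma mem_tail_of_closed {p : V} {w : G.Walk p p} (hw : ¬ w.Nil) {z : V}
    (hz : z ∈ w.support) : z ∈ w.support.tail := by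
  rw [w.support_eq_cons, List.mem_cons] at hz
  rcases hz with rfl | hz
  · exact end_mem_support_tail w hw
  · exact hz

lemma mem_support_rotate {p x' : V} {c : G.Walk p p} (hc : ¬ c.Nil)
    (h : x' ∈ c.support) {z : V} (hz : z ∈ c.support) : z ∈ (c.rotate _ h).support := by
  have h1 : z ∈ c.support.tail := mem_tail_of_closed hc hz
  have h2 : z ∈ (c.rotate _ h).support.tail := (Walk.support_rotate c _ h).mem_iff.mpr h1
  rw [(c.rotate _ h).support_eq_cons]
  exact List.mem_cons_of_mem _ h2

lemma mem_support_of_mem_rotate {p x' : V} {c : G.Walk p p}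
    (h : x' ∈ c.support) {z : V} (hz : z ∈ (c.rotate _ h).support) : z ∈ c.support := by
  unfold Walk.rotate at hz
  rw [Walk.mem_support_append_iff] at hz
  rcases hz with hz | hz
  · exact c.support_dropUntil_subset h hz
  · exact c.support_takeUntil_subset h hz

set_option maxHeartbeats 1000000 in
lemma key {u v x y : V}
    (hnoeven : ∀ (v : V) (c : G.Walk v v), c.IsCycle → ¬ Even c.length)
    (c₁ : G.Walk u u) (c₂ : G.Walk v v) (hc₁ : c₁.IsCycle) (hc₂ : c₂.IsCycle)
    (hx1 : x ∈ c₁.support) (hx2 : x ∈ c₂.support)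
    (hy1 : y ∈ c₁.support) (hy2 : y ∈ c₂.support) (hxy : x ≠ y)
    (e : Sym2 V) (he2 : e ∈ c₂.edges) (he1 : e ∉ c₁.edges) : False := by
  classical
  set S : Set V := {z | z ∈ c₁.support} with hSdef
  set F : Set (Sym2 V) := {f | f ∈ c₁.edges} with hFdef
  have hF : ∀ f ∈ F, ∀ z, z ∈ f → z ∈ S := by
    intro f hf z hz
    revert hf hz
    refine Sym2.ind (fun p q hf hz => ?_) f
    rcases Sym2.mem_iff.mp hz with rfl | rfl
    · exact c₁.fst_mem_support_of_mem_edges hf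
    · exact c₁.snd_mem_support_of_mem_edges hf
  set c2' : G.Walk x x := c₂.rotate _ hx2 with hc2'def
  have hc2' : c2'.IsCycle := hc₂.rotate hx2
  have hnil2 : ¬ c2'.Nil := hc2'.not_nil
  have he2' : e ∈ c2'.edges := (Walk.rotate_edges c₂ _ hx2).mem_iff.mpr he2
  have hy2' : y ∈ c2'.support := mem_support_rotate hc₂.not_nil hx2 hy2
  obtain ⟨a, b, ha, hb, w1, Q, w2, hsplit, hQnil, hint, hQF⟩ :=
    arc_extraction c2' S F hF hx1 hx1 ⟨e, he2', he1⟩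
  -- basic consequences
  have hsupp : c2'.support.tail = w1.support.tail ++ (Q.support.tail ++ w2.support.tail) := by
    rw [hsplit, Walk.tail_support_append, Walk.tail_support_append]
  have hTnd : (w1.support.tail ++ (Q.support.tail ++ w2.support.tail)).Nodup := by
    rw [← hsupp]; exact hc2'.support_nodup
  have hQtail_ne : Q.support.tail ≠ [] := support_tail_ne_nil Q hQnil
  have hQlen : 0 < Q.length := Walk.not_nil_iff_lt_length.mp hQnil
  have hQtail_mem : ∀ z ∈ Q.support.tail, z ∈ Q.support.tail.dropLast ∨ z = b := by
    intro z hz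
    have hb' : b ∈ Q.support.tail := end_mem_tail' Q hQtail_ne
    have hlast : Q.support.tail.getLast hQtail_ne = b := by
      rw [List.getLast_tail]; exact Q.getLast_support
    rw [← List.dropLast_append_getLast hQtail_ne, hlast, List.mem_append,
      List.mem_singleton] at hz
    exact hz
  have hQE : Q.edges.Nodup := by
    have h1 : c2'.edges = w1.edges ++ (Q.edges ++ w2.edges) := by
      rw [hsplit, Walk.edges_append, Walk.edges_append]
    have h2 := hc2'.isCircuit.isTrail.edges_nodup
    rw [h1] at h2
    exact (h2.of_append_right).of_append_left
  by_cases hab : a = b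
  · -- degenerate case: the arc is closed, so it must be the whole cycle
    subst hab
    have haQt : a ∈ Q.support.tail := end_mem_support_tail Q hQnil
    have hdisj1 : w1.support.tail.Disjoint (Q.support.tail ++ w2.support.tail) :=
      List.disjoint_of_nodup_append hTnd
    have hw1 : w1.support.tail = [] := by
      by_contra h
      exact hdisj1 (end_mem_tail' w1 h) (List.mem_append_left _ haQt)
    have hw1nil : w1.Nil := by
      rw [Walk.nil_iff_length_eq]
      have h1 := congrArg List.length hw1
      simp only [List.length_tail, Walk.length_support, List.length_nil] at h1
      omega
    have hxa : x = a := hw1nil.eq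
    subst hxa
    have hdisj2 : Q.support.tail.Disjoint w2.support.tail :=
      List.disjoint_of_nodup_append (hTnd.of_append_right)
    have hw2 : w2.support.tail = [] := by
      by_contra h
      exact hdisj2 haQt (end_mem_tail' w2 h)
    have hy : y ∈ Q.support.tail := by
      have h1 := mem_tail_of_closed hnil2 hy2'
      rw [hsupp, hw1, hw2] at h1
      simpa using h1
    rcases hQtail_mem y hy with h1 | rfl
    · exact hint y h1 hy1
    · exact hxy rfl
  · -- main case: a ≠ b, both on c₁; split c₁ at a and b
    have haQ : a ∉ Q.support.tail := by
      intro h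
      rcases hQtail_mem a h with h' | h'
      · exact hint a h' ha
      · exact hab h'
    set c1' : G.Walk a a := c₁.rotate _ ha with hc1'def
    have hc1' : c1'.IsCycle := hc₁.rotate ha
    have hb' : b ∈ c1'.support := mem_support_rotate hc₁.not_nil ha hb
    set P1 : G.Walk a b := c1'.takeUntil b hb' with hP1def
    set P2 : G.Walk b a := c1'.dropUntil b hb' with hP2def
    have hPspec : P1.append P2 = c1' := c1'.take_spec hb'
    have hP1nn : ¬ P1.Nil := Walk.not_nil_of_ne hab
    have hP2nn : ¬ P2.Nil := Walk.not_nil_of_ne (Ne.symm hab)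
    have hT1 : (P1.support.tail ++ P2.support.tail).Nodup := by
      have := hc1'.support_nodup
      rwa [← hPspec, Walk.tail_support_append] at this
    have hT1disj : P1.support.tail.Disjoint P2.support.tail :=
      List.disjoint_of_nodup_append hT1
    have hbP1 : b ∈ P1.support.tail := end_mem_support_tail P1 hP1nn
    have haP2 : a ∈ P2.support.tail := end_mem_support_tail P2 hP2nn
    have hE1 : (P1.edges ++ P2.edges).Nodup := by
      have := hc1'.isCircuit.isTrail.edges_nodup
      rwa [← hPspec, Walk.edges_append] at this
    have hc1'edges : ∀ f ∈ c1'.edges, f ∈ c₁.edges := by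
      intro f hf; exact (Walk.rotate_edges c₁ _ ha).mem_iff.mp hf
    have hP1edges : ∀ f ∈ P1.edges, f ∈ c₁.edges := by
      intro f hf; exact hc1'edges f (c1'.edges_takeUntil_subset hb' hf)
    have hP2edges : ∀ f ∈ P2.edges, f ∈ c₁.edges := by
      intro f hf; exact hc1'edges f (c1'.edges_dropUntil_subset hb' hf)
    have hP1supp : ∀ z ∈ P1.support, z ∈ c₁.support := by
      intro z hz
      exact mem_support_of_mem_rotate ha (c1'.support_takeUntil_subset hb' hz)
    have hP2supp : ∀ z ∈ P2.support, z ∈ c₁.support := by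
      intro z hz
      exact mem_support_of_mem_rotate ha (c1'.support_dropUntil_subset hb' hz)
    have hTQ : Q.support.tail.Nodup := (hTnd.of_append_right).of_append_left
    -- D2 := Q ++ P2 is a cycle
    have hD2 : (Q.append P2).IsCycle := by
      rw [Walk.isCycle_def]
      refine ⟨⟨?_⟩, ?_, ?_⟩
      · rw [Walk.edges_append]
        refine List.Nodup.append hQE (hE1.of_append_right) ?_
        intro f hfQ hfP2
        exact hQF f hfQ (hP2edges f hfP2)
      · intro h
        have := congrArg Walk.length h
        rw [Walk.length_append] at this
        simp only [Walk.length_nil] at this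
        omega
      · rw [Walk.tail_support_append]
        refine List.Nodup.append hTQ (hT1.of_append_right) ?_
        intro z hzQ hzP2
        rcases hQtail_mem z hzQ with h1 | rfl
        · exact hint z h1 (hP2supp z (List.mem_of_mem_tail hzP2))
        · exact hT1disj hbP1 hzP2
    -- D1 := P1 ++ Q.reverse is a cycle
    have hD1 : (P1.append Q.reverse).IsCycle := by
      rw [Walk.isCycle_def]
      refine ⟨⟨?_⟩, ?_, ?_⟩
      · rw [Walk.edges_append, Walk.edges_reverse]
        refine List.Nodup.append (hE1.of_append_left) (List.nodup_reverse.mpr hQE) ?_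
        intro f hfP1 hfQ
        rw [List.mem_reverse] at hfQ
        exact hQF f hfQ (hP1edges f hfP1)
      · intro h
        have := congrArg Walk.length h
        rw [Walk.length_append] at this
        have h1 : 0 < P1.length := Walk.not_nil_iff_lt_length.mp hP1nn
        simp only [Walk.length_nil, Walk.length_reverse] at this
        omega
      · rw [Walk.tail_support_append, Walk.support_reverse,
          List.tail_reverse, Q.support_eq_cons,
          List.dropLast_cons_of_ne_nil hQtail_ne]
        refine List.Nodup.append (hT1.of_append_left) ?_ ?_
        · rw [List.nodup_reverse, List.nodup_cons]
          exact ⟨fun h => haQ ((List.dropLast_sublist _).subset h),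
            hTQ.sublist (List.dropLast_sublist _)⟩
        · intro z hzP1 hz
          rw [List.mem_reverse, List.mem_cons] at hz
          rcases hz with rfl | hz
          · exact hT1disj hzP1 haP2
          · exact hint z hz (hP1supp z (List.mem_of_mem_tail hzP1))
    -- parity contradiction
    have hlen : P1.length + P2.length = c₁.length := by
      have h1 := congrArg Walk.length hPspec
      have h2 := congrArg Walk.length (c₁.take_spec ha)
      rw [Walk.length_append] at h1
      rw [Walk.length_append] at h2
      have h3 : c1'.length = c₁.length := by
        rw [hc1'def]
        unfold Walk.rotate
        rw [Walk.length_append]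
        omega
      omega
    have h0 := hnoeven u c₁ hc₁
    have h1 := hnoeven a _ hD1
    have h2 := hnoeven a _ hD2
    rw [Walk.length_append, Walk.length_reverse] at h1
    rw [Walk.length_append] at h2
    rw [← hlen] at h0
    simp only [Nat.even_add] at h0 h1 h2
    tauto

end Aux

/-- In a simple graph with no even cycles, two distinct cycles (distinct meaning they do
not have the same edge set) share at most one vertex. -/
theorem stmt1 {V : Type*} (G : SimpleGraph V)
    (hnoeven : ∀ (v : V) (c : G.Walk v v), c.IsCycle → ¬ Even c.length)
    {u v : V} (c₁ : G.Walk u u) (c₂ : G.Walk v v)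
    (hc₁ : c₁.IsCycle) (hc₂ : c₂.IsCycle)
    (hne : {e : Sym2 V | e ∈ c₁.edges} ≠ {e : Sym2 V | e ∈ c₂.edges}) :
    ∀ x y : V, x ∈ c₁.support → x ∈ c₂.support →
      y ∈ c₁.support → y ∈ c₂.support → x = y := by
  classical
  intro x y hx1 hx2 hy1 hy2
  by_contra hxy
  have hdiff : (∃ e, e ∈ c₁.edges ∧ e ∉ c₂.edges) ∨ (∃ e, e ∈ c₂.edges ∧ e ∉ c₁.edges) := by
    by_contra h
    push_neg at h
    obtain ⟨h1, h2⟩ := h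
    apply hne
    ext f
    simp only [Set.mem_setOf_eq]
    exact ⟨h1 f, h2 f⟩
  rcases hdiff with ⟨e, he1, he2⟩ | ⟨e, he2, he1⟩
  · exact (key hnoeven c₂ c₁ hc₂ hc₁ hx2 hx1 hy2 hy1 hxy e he1 he2).elim
  · exact (key hnoeven c₁ c₂ hc₁ hc₂ hx1 hx2 hy1 hy2 hxy e he2 he1).elim
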